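/- Let p > 1 and r > 2 be real numbers with pr > 1. Define x on (0, ∞) by x(s) = -1 for 0 < s < 1 and x(s) = (r-1)·s^{-r} for s > 1, and set y(s) = (1/s)·∫_0^s x. Then y(s) = -1 for 0 < s < 1 and y(s) = -s^{-r} for s > 1; consequently ∫_0^∞ |x|^p = 1 + (r-1)^p/(pr-1) and ∫_0^∞ |y - x|^p = r^p/(pr-1). -/

import Mathlib

open MeasureTheory

/-- The extremal example in the continuous case: for `p > 1`, `r > 2` with `pr > 1`, the
function `x` equal to `-1` on `(0,1)` and to `(r-1) s^{-r}` on `(1,∞)` has Hardy average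
`y = Px` equal to `-1` on `(0,1)` and to `-s^{-r}` on `(1,∞)`, with
`∫_0^∞ |x|^p = 1 + (r-1)^p/(pr-1)` and `∫_0^∞ |y - x|^p = r^p/(pr-1)`. -/
theorem stmt16 (p r : ℝ) (hp : 1 < p) (hr : 2 < r) (hpr : 1 < p * r)
    (x : ℝ → ℝ) (hx : ∀ s : ℝ, 0 < s → x s = if s < 1 then -1 else (r - 1) * s ^ (-r))
    (y : ℝ → ℝ) (hy : ∀ s : ℝ, 0 < s → y s = (1 / s) * ∫ θ in (0 : ℝ)..s, x θ) :
    (∀ s : ℝ, 0 < s → s < 1 → y s = -1) ∧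
    (∀ s : ℝ, 1 < s → y s = -s ^ (-r)) ∧
    (∫ s in Set.Ioi (0 : ℝ), |x s| ^ p = 1 + (r - 1) ^ p / (p * r - 1)) ∧
    (∫ s in Set.Ioi (0 : ℝ), |y s - x s| ^ p = r ^ p / (p * r - 1)) := by
  have hr1 : (1:ℝ) < r := by linarith
  have hrne : r - 1 ≠ 0 := ne_of_gt (by linarith)
  have hrp1 : 1 < r * p := by linarith [hpr, mul_comm p r]
  have hrpne : p * r - 1 ≠ 0 := ne_of_gt (by linarith)
  have hne1 : ∀ᵐ θ : ℝ, θ ≠ 1 := by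
    rw [Filter.eventually_iff, MeasureTheory.mem_ae_iff]
    simpa using measure_singleton (1:ℝ)
  -- x on (≥ 1)
  have hxge : ∀ s : ℝ, 1 ≤ s → x s = (r - 1) * s ^ (-r) := by
    intro s hs
    rw [hx s (by linarith), if_neg (not_lt.2 hs)]
  -- y on (0,1)
  have hy1 : ∀ s : ℝ, 0 < s → s < 1 → y s = -1 := by
    intro s hs hs1
    rw [hy s hs]
    have h1 : ∫ θ in (0:ℝ)..s, x θ = ∫ θ in (0:ℝ)..s, (-1:ℝ) := by
      apply intervalIntegral.integral_congr_ae
      filter_upwards with θ hθ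
      rw [Set.uIoc_of_le hs.le] at hθ
      rw [hx θ hθ.1, if_pos (lt_of_le_of_lt hθ.2 hs1)]
    rw [h1, intervalIntegral.integral_const]
    field_simp
    simp
  -- ∫_0^1 x = -1
  have hI1 : ∫ θ in (0:ℝ)..1, x θ = -1 := by
    have hae : ∀ᵐ θ : ℝ, θ ∈ Set.uIoc (0:ℝ) 1 → x θ = -1 := by
      filter_upwards [hne1] with θ hθ1 hθ
      rw [Set.uIoc_of_le zero_le_one] at hθ
      rw [hx θ hθ.1, if_pos (lt_of_le_of_ne hθ.2 hθ1)]
    rw [intervalIntegral.integral_congr_ae hae, intervalIntegral.integral_const]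
    simp
  -- interval integrability on [0,1]
  have haeIoc : x =ᵐ[volume.restrict (Set.Ioc (0:ℝ) 1)] fun _ => (-1:ℝ) := by
    rw [Filter.EventuallyEq, ae_restrict_iff' measurableSet_Ioc]
    filter_upwards [hne1] with θ hθ1 hθ
    rw [hx θ hθ.1, if_pos (lt_of_le_of_ne hθ.2 hθ1)]
  have hint1 : IntervalIntegrable x volume 0 1 := by
    rw [intervalIntegrable_iff_integrableOn_Ioc_of_le zero_le_one]
    exact (integrableOn_const (by simp) (by simp)).congr haeIoc.symm
  -- ∫_1^s x
  have hI2 : ∀ s : ℝ, 1 < s → ∫ θ in (1:ℝ)..s, x θ = 1 - s ^ (1 - r) := by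
    intro s hs
    have h1 : ∫ θ in (1:ℝ)..s, x θ = ∫ θ in (1:ℝ)..s, (r - 1) * θ ^ (-r) := by
      apply intervalIntegral.integral_congr
      intro θ hθ
      rw [Set.uIcc_of_le hs.le] at hθ
      exact hxge θ hθ.1
    rw [h1, intervalIntegral.integral_const_mul, integral_rpow]
    · rw [Real.one_rpow, show -r + 1 = 1 - r by ring]
      have h1r : (1:ℝ) - r ≠ 0 := by intro h; linarith
      field_simp
      ring
    · refine Or.inr ⟨by intro h; rw [neg_eq_iff_eq_neg] at h; linarith [h], ?_⟩
      rw [Set.uIcc_of_le hs.le]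
      intro h
      exact absurd h.1 (by norm_num)
  have hcont : ∀ s : ℝ, 1 < s → IntervalIntegrable x volume 1 s := by
    intro s hs
    rw [intervalIntegrable_iff_integrableOn_Ioc_of_le hs.le]
    have hc : ContinuousOn (fun θ : ℝ => (r - 1) * θ ^ (-r)) (Set.Icc 1 s) := by
      apply continuousOn_const.mul
      apply ContinuousOn.rpow_const continuousOn_id
      intro θ hθ
      exact Or.inl (by simpa using ne_of_gt (lt_of_lt_of_le zero_lt_one hθ.1))
    refine ((hc.integrableOn_Icc).mono_set Set.Ioc_subset_Icc_self).congr ?_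
    rw [Filter.EventuallyEq, ae_restrict_iff' measurableSet_Ioc]
    filter_upwards with θ hθ
    exact (hxge θ hθ.1.le).symm
  -- y on (1,∞)
  have hy2 : ∀ s : ℝ, 1 < s → y s = -s ^ (-r) := by
    intro s hs
    have hs0 : (0:ℝ) < s := by linarith
    rw [hy s hs0, ← intervalIntegral.integral_add_adjacent_intervals hint1 (hcont s hs),
      hI1, hI2 s hs]
    have hsr : s ^ (1 - r) = s * s ^ (-r) := by
      rw [show (1:ℝ) - r = 1 + -r by ring, Real.rpow_add hs0, Real.rpow_one]
    rw [hsr]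
    field_simp
    ring
  refine ⟨hy1, hy2, ?_, ?_⟩
  · -- ∫ |x|^p
    have hunion : Set.Ioc (0:ℝ) 1 ∪ Set.Ioi 1 = Set.Ioi 0 := Set.Ioc_union_Ioi_eq_Ioi zero_le_one
    have haeA : (fun s => |x s| ^ p) =ᵐ[volume.restrict (Set.Ioc (0:ℝ) 1)] fun _ => (1:ℝ) := by
      filter_upwards [haeIoc] with s hs
      rw [hs]
      simp [Real.one_rpow]
    have hptB : ∀ s ∈ Set.Ioi (1:ℝ), |x s| ^ p = (r - 1) ^ p * s ^ (-(r * p)) := by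
      intro s hs
      have hs1 : (1:ℝ) < s := hs
      have hs0 : (0:ℝ) < s := by linarith
      rw [hxge s hs1.le,
        abs_of_nonneg (mul_nonneg (by linarith) (Real.rpow_nonneg hs0.le _)),
        Real.mul_rpow (by linarith) (Real.rpow_nonneg hs0.le _),
        ← Real.rpow_mul hs0.le, neg_mul]
    have hne0 : -(r * p) + 1 ≠ 0 := by intro h; linarith
    have hintA : IntegrableOn (fun s => |x s| ^ p) (Set.Ioc (0:ℝ) 1) :=
      (integrableOn_const (by simp) (by simp)).congr haeA.symm
    have hintB : IntegrableOn (fun s => |x s| ^ p) (Set.Ioi (1:ℝ)) := by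
      have h := (integrableOn_Ioi_rpow_of_lt (show -(r*p) < -1 by linarith) zero_lt_one).const_mul
        ((r-1)^p)
      exact MeasureTheory.IntegrableOn.congr_fun h (fun s hs => (hptB s hs).symm) measurableSet_Ioi
    rw [← hunion, setIntegral_union Set.Ioc_disjoint_Ioi_same measurableSet_Ioi hintA hintB]
    have hA : ∫ s in Set.Ioc (0:ℝ) 1, |x s| ^ p = 1 := by
      rw [integral_congr_ae haeA]; simp
    have hB : ∫ s in Set.Ioi (1:ℝ), |x s| ^ p = (r-1)^p / (p*r-1) := by
      rw [setIntegral_congr_fun measurableSet_Ioi hptB, integral_const_mul,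
        integral_Ioi_rpow_of_lt (by linarith) zero_lt_one, Real.one_rpow]
      rw [show -(r * p) + 1 = -(p * r - 1) by ring, neg_div_neg_eq]
      ring
    rw [hA, hB]
  · -- second integral
    have hunion : Set.Ioc (0:ℝ) 1 ∪ Set.Ioi 1 = Set.Ioi 0 := Set.Ioc_union_Ioi_eq_Ioi zero_le_one
    have hne0 : -(r * p) + 1 ≠ 0 := by intro h; linarith
    have haeA : (fun s => |y s - x s| ^ p) =ᵐ[volume.restrict (Set.Ioc (0:ℝ) 1)]
        fun _ => (0:ℝ) := by
      rw [Filter.EventuallyEq, ae_restrict_iff' measurableSet_Ioc]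
      filter_upwards [hne1] with s hs1 hs
      have h1 : s < 1 := lt_of_le_of_ne hs.2 hs1
      rw [hy1 s hs.1 h1, hx s hs.1, if_pos h1]
      norm_num [Real.zero_rpow (show p ≠ 0 from ne_of_gt (by linarith))]
    have hptB : ∀ s ∈ Set.Ioi (1:ℝ), |y s - x s| ^ p = r ^ p * s ^ (-(r * p)) := by
      intro s hs
      have hs1 : (1:ℝ) < s := hs
      have hs0 : (0:ℝ) < s := by linarith
      have h1 : y s - x s = -(r * s ^ (-r)) := by
        rw [hy2 s hs1, hxge s hs1.le]; ring
      rw [h1, abs_neg, abs_of_nonneg (mul_nonneg (by linarith) (Real.rpow_nonneg hs0.le _)),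
        Real.mul_rpow (by linarith) (Real.rpow_nonneg hs0.le _), ← Real.rpow_mul hs0.le, neg_mul]
    have hintA : IntegrableOn (fun s => |y s - x s| ^ p) (Set.Ioc (0:ℝ) 1) :=
      (integrableOn_const (by simp) (by simp)).congr haeA.symm
    have hintB : IntegrableOn (fun s => |y s - x s| ^ p) (Set.Ioi (1:ℝ)) := by
      have h := (integrableOn_Ioi_rpow_of_lt (show -(r*p) < -1 by linarith) zero_lt_one).const_mul
        (r^p)
      exact MeasureTheory.IntegrableOn.congr_fun h (fun s hs => (hptB s hs).symm) measurableSet_Ioi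
    rw [← hunion, setIntegral_union Set.Ioc_disjoint_Ioi_same measurableSet_Ioi hintA hintB]
    have hA : ∫ s in Set.Ioc (0:ℝ) 1, |y s - x s| ^ p = 0 := by
      rw [integral_congr_ae haeA]; simp
    have hB : ∫ s in Set.Ioi (1:ℝ), |y s - x s| ^ p = r ^ p / (p*r-1) := by
      rw [setIntegral_congr_fun measurableSet_Ioi hptB, integral_const_mul,
        integral_Ioi_rpow_of_lt (by linarith) zero_lt_one, Real.one_rpow]
      rw [show -(r * p) + 1 = -(p * r - 1) by ring, neg_div_neg_eq]
      ring
    rw [hA, hB, zero_add]
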